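/- Let X and Y be perfect compact metric spaces (no isolated points), A ⊆ B ⊆ X and C ⊆ D ⊆ Y closed subsets with A, C nonempty. Form X₁ = I_d(X,A) with isolated points ã_n (d an admissible sequence in A), note B' = (B × {0}) ∪ {ã_n : n ≥ 1} is a closed subset of X₁ containing all isolated points of X₁, and form I₂(X,B,A) = I_{d'}(X₁, B') for an admissible sequence d' in B'; form I₂(Y,D,C) analogously from admissible sequences e, e'. Then there exists a homeomorphism f : X → Y with f(A) = C and f(B) = D if and only if I₂(X,B,A) and I₂(Y,D,C) are homeomorphic. -/

import Mathlib

open Set Topology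

/-- The space `I_d(Z,W) ⊆ Z × [0,1]`: the copy `Z × {0}` of `Z` together with the isolated
points `ã_n = (d_n, 1/n)` (here indexed by `n : ℕ`, with `ã_n = (d n, 1/(n+1))`). -/
def Itilde {Z : Type*} [TopologicalSpace Z] (d : ℕ → Z) : Set (Z × ℝ) :=
  (Set.univ ×ˢ {(0 : ℝ)}) ∪ Set.range (fun n : ℕ => (d n, 1 / (n + 1 : ℝ)))

/-- A sequence `d` is admissible for `W` if it takes values in `W`, has dense range in `W`,
and attains each of its values at infinitely many indices. -/
def Admissible {Z : Type*} [TopologicalSpace Z] (W : Set Z) (d : ℕ → Z) : Prop :=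
  (∀ n, d n ∈ W) ∧ W ⊆ closure (Set.range d) ∧ ∀ n, {m : ℕ | d m = d n}.Infinite

/-- The subset `B' = (B × {0}) ∪ {ã_n : n}` of `I_d(X,A)`. -/
def liftSet {Z : Type*} [TopologicalSpace Z] (d : ℕ → Z) (B : Set Z) : Set ↥(Itilde d) :=
  {p | ((p : Z × ℝ).1 ∈ B ∧ (p : Z × ℝ).2 = 0) ∨
    ∃ n : ℕ, (p : Z × ℝ) = (d n, 1 / (n + 1 : ℝ))}

open Filter

set_option linter.unusedSectionVars false

namespace I2p

noncomputable section

variable {Z : Type*} [MetricSpace Z]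

/-- the isolated points of `Itilde c` -/
def pt (c : ℕ → Z) (n : ℕ) : Z × ℝ := (c n, 1 / (n + 1 : ℝ))

lemma ht_pos (n : ℕ) : (0:ℝ) < 1/(n+1) := by positivity

lemma ht_le_one (n : ℕ) : 1/((n:ℝ)+1) ≤ 1 := by
  rw [div_le_one (by positivity)]
  linarith [Nat.cast_nonneg (α := ℝ) n]

lemma ht_inj {n m : ℕ} (h : 1/((n:ℝ)+1) = 1/((m:ℝ)+1)) : n = m := by
  field_simp at h
  have h' : (n:ℝ) = m := by linarith
  exact_mod_cast h'

lemma ht_lt_ht {n m : ℕ} (h : m < n) : 1/((n:ℝ)+1) < 1/((m:ℝ)+1) := by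
  apply one_div_lt_one_div_of_lt (by positivity)
  exact_mod_cast Nat.add_lt_add_right h 1

lemma pt_inj {c : ℕ → Z} {n m : ℕ} (h : pt c n = pt c m) : n = m :=
  ht_inj (congrArg Prod.snd h)

lemma pt_snd (c : ℕ → Z) (n : ℕ) : (pt c n).2 = 1/((n:ℝ)+1) := rfl

lemma mem_Itilde {c : ℕ → Z} {p : Z × ℝ} :
    p ∈ Itilde c ↔ p.2 = 0 ∨ ∃ n, p = pt c n := by
  unfold Itilde pt
  simp only [Set.mem_union, Set.mem_prod, Set.mem_univ, Set.mem_singleton_iff, true_and,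
    Set.mem_range]
  constructor
  · rintro (h | ⟨n, rfl⟩)
    · exact Or.inl h
    · exact Or.inr ⟨n, rfl⟩
  · rintro (h | ⟨n, rfl⟩)
    · exact Or.inl h
    · exact Or.inr ⟨n, rfl⟩

lemma base_mem (c : ℕ → Z) (z : Z) : ((z, 0) : Z × ℝ) ∈ Itilde c :=
  Or.inl ⟨Set.mem_univ _, rfl⟩

lemma pt_mem (c : ℕ → Z) (n : ℕ) : pt c n ∈ Itilde c := Or.inr ⟨n, rfl⟩

lemma finite_big_ht {t : ℝ} (ht : 0 < t) : {n : ℕ | t ≤ 1/((n:ℝ)+1)}.Finite := by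
  apply Set.Finite.subset (Set.finite_Iic ⌈1/t⌉₊)
  intro n hn
  simp only [Set.mem_setOf_eq] at hn
  have hpos : (0:ℝ) < (n:ℝ)+1 := by positivity
  have h2 : t * ((n:ℝ)+1) ≤ 1 := (le_div_iff₀ hpos).1 hn
  have h1 : (n:ℝ) ≤ 1/t := by rw [le_div_iff₀ ht]; nlinarith
  have : (n:ℝ) ≤ (⌈1/t⌉₊ : ℝ) := h1.trans (Nat.le_ceil _)
  exact Set.mem_Iic.2 (by exact_mod_cast this)

lemma snd_nonneg_of_mem {c : ℕ → Z} {p : Z × ℝ} (hp : p ∈ Itilde c) : 0 ≤ p.2 := by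
  rcases mem_Itilde.1 hp with h | ⟨n, rfl⟩
  · rw [h]
  · exact (ht_pos n).le

lemma eq_pt_of_tendsto {x : ℕ → Z × ℝ} {c : ℕ → Z} {p : Z × ℝ}
    (hx : ∀ k, x k ∈ Itilde c) (hlim : Tendsto x atTop (𝓝 p)) (hp : p.2 ≠ 0) :
    ∃ n, p = pt c n := by
  have hlim2 : Tendsto (fun k => (x k).2) atTop (𝓝 p.2) :=
    ((continuous_snd.tendsto p).comp hlim)
  have hp2 : 0 < p.2 := by
    rcases lt_or_eq_of_le (ge_of_tendsto' hlim2 (fun k => snd_nonneg_of_mem (hx k))) with h | h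
    · exact h
    · exact absurd h.symm hp
  have hev : ∀ᶠ k in atTop, p.2/2 < (x k).2 :=
    hlim2.eventually (eventually_gt_nhds (half_lt_self hp2))
  set F : Set (Z × ℝ) := pt c '' {n | p.2/2 ≤ 1/((n:ℝ)+1)} with hF
  have hFfin : F.Finite := (finite_big_ht (by linarith)).image _
  have hmem : ∀ᶠ k in atTop, x k ∈ F := by
    filter_upwards [hev] with k hk
    rcases mem_Itilde.1 (hx k) with h | ⟨n, hn⟩
    · exfalso; rw [h] at hk; linarith
    · exact ⟨n, by rw [hn] at hk; exact le_of_lt hk, hn.symm⟩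
  have := hFfin.isClosed.mem_of_tendsto hlim hmem
  rcases this with ⟨n, _, hn⟩
  exact ⟨n, hn.symm⟩

lemma isClosed_Itilde (c : ℕ → Z) : IsClosed (Itilde c) := by
  apply IsSeqClosed.isClosed
  intro x p hx hlim
  by_cases hp : p.2 = 0
  · exact mem_Itilde.2 (Or.inl hp)
  · obtain ⟨n, rfl⟩ := eq_pt_of_tendsto hx hlim hp
    exact pt_mem c n

lemma isCompact_Itilde [CompactSpace Z] (c : ℕ → Z) : IsCompact (Itilde c) := by
  apply IsCompact.of_isClosed_subset (isCompact_univ.prod (isCompact_Icc (a := (0:ℝ)) (b := 1)))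
    (isClosed_Itilde c)
  intro p hp
  rcases mem_Itilde.1 hp with h | ⟨n, rfl⟩
  · exact ⟨Set.mem_univ _, by rw [h]; exact ⟨le_refl 0, zero_le_one⟩⟩
  · exact ⟨Set.mem_univ _, (ht_pos n).le, ht_le_one n⟩

instance instCompactItilde [CompactSpace Z] (c : ℕ → Z) : CompactSpace ↥(Itilde c) :=
  isCompact_iff_compactSpace.1 (isCompact_Itilde c)

lemma closure_isoPts (c : ℕ → Z) (hinf : ∀ n, {m | c m = c n}.Infinite) :
    closure (Set.range (pt c)) = Set.range (pt c) ∪ (closure (Set.range c)) ×ˢ {(0:ℝ)} := by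
  apply Set.Subset.antisymm
  · intro p hp
    obtain ⟨x, hx, hlim⟩ := mem_closure_iff_seq_limit.1 hp
    by_cases h2 : p.2 = 0
    · right
      refine ⟨?_, h2⟩
      apply mem_closure_of_tendsto ((continuous_fst.tendsto p).comp hlim)
      filter_upwards with k
      obtain ⟨n, hn⟩ := hx k
      have : (Prod.fst ∘ x) k = c n := by rw [Function.comp_apply, ← hn]; rfl
      exact ⟨n, this.symm⟩
    · obtain ⟨n, rfl⟩ := eq_pt_of_tendsto (fun k => Or.inr (hx k)) hlim h2
      exact Or.inl ⟨n, rfl⟩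
  · apply Set.union_subset subset_closure
    rintro ⟨w, t⟩ ⟨hw, ht⟩
    simp only [Set.mem_singleton_iff] at ht
    subst ht
    rw [Metric.mem_closure_iff]
    intro ε hε
    obtain ⟨y, hy, hdy⟩ := Metric.mem_closure_iff.1 hw (ε/2) (by linarith)
    obtain ⟨n, rfl⟩ := hy
    obtain ⟨M, hM⟩ := exists_nat_gt (1/ε)
    obtain ⟨m, hm, hmM⟩ := (hinf n).exists_gt M
    refine ⟨pt c m, Set.mem_range_self m, ?_⟩
    rw [Prod.dist_eq]
    apply max_lt
    · show dist w (c m) < ε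
      rw [hm]; linarith
    · show dist (0:ℝ) (1/((m:ℝ)+1)) < ε
      have h1 : (1:ℝ)/((m:ℝ)+1) < ε := by
        rw [div_lt_iff₀ (by positivity)]
        have : (M:ℝ) < (m:ℝ) := by exact_mod_cast hmM
        have h2 : 1/ε < (m:ℝ)+1 := by linarith
        rw [div_lt_iff₀ hε] at h2
        linarith
      rw [Real.dist_eq, zero_sub, abs_neg, abs_of_nonneg (ht_pos m).le]
      exact h1

/-- isolated points of the subtype `Itilde c` are exactly the non-base points -/
lemma isOpen_singleton_pt (c : ℕ → Z) {q : ↥(Itilde c)} (hq : (q : Z × ℝ).2 ≠ 0) :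
    IsOpen ({q} : Set ↥(Itilde c)) := by
  obtain ⟨n, hn⟩ := (mem_Itilde.1 q.2).resolve_left hq
  set b : ℝ := 1/((n:ℝ)+1) + 1/(((n:ℝ)+1)*((n:ℝ)+2)) with hb
  have key : ({q} : Set ↥(Itilde c)) =
      Subtype.val ⁻¹' (Set.univ ×ˢ Set.Ioo (1/((n:ℝ)+2)) b) := by
    apply Set.Subset.antisymm
    · rintro r rfl
      refine ⟨Set.mem_univ _, ?_, ?_⟩
      · rw [hn, pt_snd]
        apply one_div_lt_one_div_of_lt (by positivity)
        linarith
      · rw [hn, pt_snd, hb]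
        have : (0:ℝ) < 1/(((n:ℝ)+1)*((n:ℝ)+2)) := by positivity
        linarith
    · rintro r ⟨-, h1, h2⟩
      rcases mem_Itilde.1 r.2 with h | ⟨m, hm⟩
      · exfalso
        rw [h] at h1
        have : (0:ℝ) < 1/((n:ℝ)+2) := by positivity
        linarith
      · have hm2 : (r : Z × ℝ).2 = 1/((m:ℝ)+1) := by rw [hm, pt_snd]
        rw [hm2] at h1 h2
        have hmn : m = n := by
          by_contra hne
          rcases lt_or_gt_of_ne hne with hlt | hgt
          · -- m < n : height 1/(m+1) ≥ 1/n ≥ b, contradicts h2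
            have hn1 : (1:ℝ) ≤ (n:ℝ) := by exact_mod_cast Nat.one_le_iff_ne_zero.2 (Nat.pos_of_ne_zero (by omega)).ne'
            have hmle : (m:ℝ)+1 ≤ (n:ℝ) := by exact_mod_cast Nat.succ_le_of_lt hlt
            have h3 : 1/((n:ℝ)) ≤ 1/((m:ℝ)+1) := by
              apply one_div_le_one_div_of_le (by positivity) hmle
            have h4 : b ≤ 1/(n:ℝ) := by
              rw [hb, div_add_div _ _ (by positivity) (by positivity), div_le_div_iff₀ (by positivity) (by positivity)]
              ring_nf
              nlinarith
            linarith
          · -- n < m : height ≤ 1/(n+2), contradicts h1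
            have : (n:ℝ)+2 ≤ (m:ℝ)+1 := by
              have : n+2 ≤ m+1 := by omega
              exact_mod_cast this
            have h3 : 1/((m:ℝ)+1) ≤ 1/((n:ℝ)+2) := one_div_le_one_div_of_le (by positivity) this
            linarith
        subst hmn
        apply Subtype.ext
        rw [hm, hn]
  rw [key]
  exact (isOpen_univ.prod isOpen_Ioo).preimage continuous_subtype_val

lemma not_isOpen_singleton_base (c : ℕ → Z)
    (hisoW : ∀ z : Z, IsOpen ({z} : Set Z) → z ∈ closure (Set.range c))
    (hinf : ∀ n, {m | c m = c n}.Infinite)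
    {q : ↥(Itilde c)} (hq : (q : Z × ℝ).2 = 0) :
    ¬ IsOpen ({q} : Set ↥(Itilde c)) := by
  intro hop
  obtain ⟨ε, hε, hball⟩ := Metric.isOpen_iff.1 hop q rfl
  set z : Z := (q : Z × ℝ).1 with hz
  have hqval : (q : Z × ℝ) = (z, 0) := by
    rw [hz, ← hq]
  by_cases hzop : IsOpen ({z} : Set Z)
  · -- z isolated in Z; use the sequence
    obtain ⟨δ, hδ, hbz⟩ := Metric.isOpen_iff.1 hzop z rfl
    obtain ⟨y, hy, hdy⟩ := Metric.mem_closure_iff.1 (hisoW z hzop) δ hδ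
    obtain ⟨n, rfl⟩ := hy
    have hcn : c n = z := by
      have : c n ∈ Metric.ball z δ := by rwa [Metric.mem_ball, dist_comm]
      exact hbz this
    obtain ⟨M, hM⟩ := exists_nat_gt (1/ε)
    obtain ⟨m, hm, hmM⟩ := (hinf n).exists_gt M
    have hcm : c m = z := by rw [hm, hcn]
    have hptmem : pt c m ∈ Itilde c := pt_mem c m
    have hdist : dist (⟨pt c m, hptmem⟩ : ↥(Itilde c)) q < ε := by
      rw [Subtype.dist_eq, hqval, Prod.dist_eq]
      apply max_lt
      · show dist (c m) z < ε
        rw [hcm]; simpa using hε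
      · show dist ((1:ℝ)/((m:ℝ)+1)) (0:ℝ) < ε
        rw [Real.dist_eq, sub_zero, abs_of_nonneg (ht_pos m).le]
        rw [div_lt_iff₀ (by positivity)]
        have : (M:ℝ) < (m:ℝ) := by exact_mod_cast hmM
        have h2 : 1/ε < (m:ℝ)+1 := by linarith
        rw [div_lt_iff₀ hε] at h2
        linarith
    have hvq : pt c m = (q : Z × ℝ) := Subtype.ext_iff.1 (hball hdist)
    rw [hqval] at hvq
    have h0 : (1:ℝ)/((m:ℝ)+1) = 0 := by simpa [pt] using congrArg Prod.snd hvq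
    exact (ht_pos m).ne' h0
  · -- z not isolated: another base point nearby
    have : ¬ Metric.ball z ε ⊆ {z} := by
      intro hsub
      apply hzop
      have : {z} = Metric.ball z ε := by
        apply Set.Subset.antisymm _ hsub
        rintro _ rfl
        exact Metric.mem_ball_self hε
      rw [this]
      exact Metric.isOpen_ball
    obtain ⟨z', hz', hzne⟩ := Set.not_subset.1 this
    have hmem : ((z', 0) : Z × ℝ) ∈ Itilde c := base_mem c z'
    have hdist : dist (⟨(z', 0), hmem⟩ : ↥(Itilde c)) q < ε := by
      rw [Subtype.dist_eq, hqval, Prod.dist_eq]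
      apply max_lt
      · exact Metric.mem_ball.1 hz'
      · simpa using hε
    have hvq : ((z', 0) : Z × ℝ) = (q : Z × ℝ) := Subtype.ext_iff.1 (hball hdist)
    rw [hqval] at hvq
    exact hzne (Set.mem_singleton_iff.2 (by simpa using congrArg Prod.fst hvq))

/-! ### Back-and-forth construction of a matching bijection -/

/-- one step of the back-and-forth construction -/
def bfStep (fB fA : Finset ℕ → ℕ → ℕ) (L : List (ℕ × ℕ)) (k : ℕ) : ℕ × ℕ :=
  if k % 2 = 0 then
    (sInf {n | n ∉ L.map Prod.fst}, fB (L.map Prod.snd).toFinset (sInf {n | n ∉ L.map Prod.fst}))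
  else
    (fA (L.map Prod.fst).toFinset (sInf {m | m ∉ L.map Prod.snd}), sInf {m | m ∉ L.map Prod.snd})

/-- the list of pairs matched after `k` steps -/
def bfList (fB fA : Finset ℕ → ℕ → ℕ) : ℕ → List (ℕ × ℕ)
  | 0 => []
  | (k+1) => bfList fB fA k ++ [bfStep fB fA (bfList fB fA k) k]

/-- the pair matched at step `k` -/
def bfPair (fB fA : Finset ℕ → ℕ → ℕ) (k : ℕ) : ℕ × ℕ :=
  bfStep fB fA (bfList fB fA k) k

lemma bfList_eq (fB fA : Finset ℕ → ℕ → ℕ) (k : ℕ) :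
    bfList fB fA k = (List.range k).map (bfPair fB fA) := by
  induction k with
  | zero => rfl
  | succ k ih =>
    show bfList fB fA k ++ [bfPair fB fA k] = _
    rw [ih, List.range_succ, List.map_append]
    rfl

lemma mem_bfList (fB fA : Finset ℕ → ℕ → ℕ) (k : ℕ) (pr : ℕ × ℕ) :
    pr ∈ bfList fB fA k ↔ ∃ j < k, bfPair fB fA j = pr := by
  rw [bfList_eq]
  simp [List.mem_map]

lemma compl_list_nonempty (l : List ℕ) : {n : ℕ | n ∉ l}.Nonempty := by
  have : {n : ℕ | n ∈ l}.Finite := l.finite_toSet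
  exact (this.infinite_compl).nonempty

section BackForth

variable {M : Type*} [MetricSpace M]

lemma exists_matching (a b : ℕ → M)
    (hab : ∀ n, (a n) ∈ closure (Set.range b))
    (hba : ∀ m, (b m) ∈ closure (Set.range a))
    (ha : ∀ n, {k | a k = a n}.Infinite) (hb : ∀ m, {k | b k = b m}.Infinite) :
    ∃ σ : ℕ ≃ ℕ, ∀ ε > 0, ∃ N, ∀ n ≥ N, dist (a n) (b (σ n)) < ε := by
  classical
  -- fresh partners avoiding a finite set
  have freshB : ∀ (F : Finset ℕ) (n : ℕ), ∃ m, m ∉ F ∧ dist (a n) (b m) < 1/((n:ℝ)+1) := by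
    intro F n
    obtain ⟨y, ⟨m₀, rfl⟩, hd⟩ := Metric.mem_closure_iff.1 (hab n) _ (ht_pos n)
    obtain ⟨m, hm⟩ := ((hb m₀).diff F.finite_toSet).nonempty
    exact ⟨m, hm.2, by rw [show b m = b m₀ from hm.1]; exact hd⟩
  have freshA : ∀ (F : Finset ℕ) (m : ℕ), ∃ n, n ∉ F ∧ dist (a n) (b m) < 1/((m:ℝ)+1) := by
    intro F m
    obtain ⟨y, ⟨n₀, rfl⟩, hd⟩ := Metric.mem_closure_iff.1 (hba m) _ (ht_pos m)
    obtain ⟨n, hn⟩ := ((ha n₀).diff F.finite_toSet).nonempty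
    exact ⟨n, hn.2, by rw [show a n = a n₀ from hn.1, dist_comm]; exact hd⟩
  choose fB hfB hfB2 using freshB
  choose fA hfA hfA2 using freshA
  set p := bfPair fB fA with hp_def
  set s := bfList fB fA with hs_def
  have hmem : ∀ k pr, pr ∈ s k ↔ ∃ j < k, p j = pr := mem_bfList fB fA
  -- basic properties of each step
  have hpE : ∀ k, k % 2 = 0 → p k = (sInf {n | n ∉ (s k).map Prod.fst},
      fB ((s k).map Prod.snd).toFinset (sInf {n | n ∉ (s k).map Prod.fst})) := by
    intro k hk
    rw [hp_def, bfPair, bfStep, if_pos hk, hs_def]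
  have hpO : ∀ k, k % 2 ≠ 0 → p k = (fA ((s k).map Prod.fst).toFinset
      (sInf {m | m ∉ (s k).map Prod.snd}), sInf {m | m ∉ (s k).map Prod.snd}) := by
    intro k hk
    rw [hp_def, bfPair, bfStep, if_neg hk, hs_def]
  have hfresh : ∀ k, (p k).1 ∉ ((s k).map Prod.fst) ∧ (p k).2 ∉ ((s k).map Prod.snd) ∧
      (dist (a (p k).1) (b (p k).2) < 1/(((p k).1:ℝ)+1) ∨
       dist (a (p k).1) (b (p k).2) < 1/(((p k).2:ℝ)+1)) := by
    intro k
    by_cases hk : k % 2 = 0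
    · rw [hpE k hk]
      refine ⟨Nat.sInf_mem (compl_list_nonempty _), ?_, Or.inl (hfB2 _ _)⟩
      intro h
      exact hfB _ _ (List.mem_toFinset.2 h)
    · rw [hpO k hk]
      refine ⟨?_, Nat.sInf_mem (compl_list_nonempty _), Or.inr (hfA2 _ _)⟩
      intro h
      exact hfA _ _ (List.mem_toFinset.2 h)
  -- injectivity of both coordinates
  have hne1 : ∀ j k, j < k → (p j).1 ≠ (p k).1 := by
    intro j k hjk heq
    apply (hfresh k).1
    rw [← heq]
    exact List.mem_map.2 ⟨p j, (hmem k (p j)).2 ⟨j, hjk, rfl⟩, rfl⟩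
  have hne2 : ∀ j k, j < k → (p j).2 ≠ (p k).2 := by
    intro j k hjk heq
    apply (hfresh k).2.1
    rw [← heq]
    exact List.mem_map.2 ⟨p j, (hmem k (p j)).2 ⟨j, hjk, rfl⟩, rfl⟩
  have hinj1 : Function.Injective (fun k => (p k).1) := by
    intro j k h
    rcases Nat.lt_trichotomy j k with hlt | heq | hgt
    · exact absurd h (hne1 j k hlt)
    · exact heq
    · exact absurd h.symm (hne1 k j hgt)
  have hinj2 : Function.Injective (fun k => (p k).2) := by
    intro j k h
    rcases Nat.lt_trichotomy j k with hlt | heq | hgt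
    · exact absurd h (hne2 j k hlt)
    · exact heq
    · exact absurd h.symm (hne2 k j hgt)
  -- surjectivity of the first coordinate
  have hsur1' : ∀ i, ∀ j < i, ∃ k < 2*i, (p k).1 = j := by
    intro i
    induction i with
    | zero => omega
    | succ i ih =>
      intro j hj
      rcases Nat.lt_or_ge j i with h | h
      · obtain ⟨k, hk, hpk⟩ := ih j h
        exact ⟨k, by omega, hpk⟩
      · have hji : j = i := by omega
        subst hji
        by_cases hi : ∃ k < 2*j, (p k).1 = j
        · obtain ⟨k, hk, hpk⟩ := hi
          exact ⟨k, by omega, hpk⟩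
        · have hev : (2*j) % 2 = 0 := by omega
          have hjU : j ∈ {n | n ∉ (s (2*j)).map Prod.fst} := by
            intro hmm
            apply hi
            obtain ⟨pr, hpr, h1⟩ := List.mem_map.1 hmm
            obtain ⟨k, hk, rfl⟩ := (hmem _ _).1 hpr
            exact ⟨k, hk, h1⟩
          have hsInf : sInf {n | n ∉ (s (2*j)).map Prod.fst} = j := by
            have h1 := Nat.sInf_le hjU
            have h2 := Nat.sInf_mem (⟨j, hjU⟩ : Set.Nonempty {n | n ∉ (s (2*j)).map Prod.fst})
            rcases Nat.lt_or_ge (sInf {n | n ∉ (s (2*j)).map Prod.fst}) j with hlt | hge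
            · exfalso
              obtain ⟨k, hk, hpk⟩ := ih _ hlt
              exact h2 (List.mem_map.2 ⟨p k, (hmem _ _).2 ⟨k, hk, rfl⟩, hpk⟩)
            · omega
          refine ⟨2*j, by omega, ?_⟩
          rw [hpE _ hev]
          exact hsInf
  have hsur1 : Function.Surjective (fun k => (p k).1) := by
    intro j
    obtain ⟨k, -, hk⟩ := hsur1' (j+1) j (Nat.lt_succ_self j)
    exact ⟨k, hk⟩
  -- surjectivity of the second coordinate
  have hsur2' : ∀ i, ∀ j < i, ∃ k < 2*i+1, (p k).2 = j := by
    intro i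
    induction i with
    | zero => omega
    | succ i ih =>
      intro j hj
      rcases Nat.lt_or_ge j i with h | h
      · obtain ⟨k, hk, hpk⟩ := ih j h
        exact ⟨k, by omega, hpk⟩
      · have hji : j = i := by omega
        subst hji
        by_cases hi : ∃ k < 2*j+1, (p k).2 = j
        · obtain ⟨k, hk, hpk⟩ := hi
          exact ⟨k, by omega, hpk⟩
        · have hodd : (2*j+1) % 2 ≠ 0 := by omega
          have hjU : j ∈ {m | m ∉ (s (2*j+1)).map Prod.snd} := by
            intro hmm
            apply hi
            obtain ⟨pr, hpr, h1⟩ := List.mem_map.1 hmm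
            obtain ⟨k, hk, rfl⟩ := (hmem _ _).1 hpr
            exact ⟨k, hk, h1⟩
          have hsInf : sInf {m | m ∉ (s (2*j+1)).map Prod.snd} = j := by
            have h1 := Nat.sInf_le hjU
            have h2 := Nat.sInf_mem (⟨j, hjU⟩ : Set.Nonempty {m | m ∉ (s (2*j+1)).map Prod.snd})
            rcases Nat.lt_or_ge (sInf {m | m ∉ (s (2*j+1)).map Prod.snd}) j with hlt | hge
            · exfalso
              obtain ⟨k, hk, hpk⟩ := ih _ hlt
              exact h2 (List.mem_map.2 ⟨p k, (hmem _ _).2 ⟨k, by omega, rfl⟩, hpk⟩)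
            · omega
          refine ⟨2*j+1, by omega, ?_⟩
          rw [hpO _ hodd]
          exact hsInf
  have hsur2 : Function.Surjective (fun k => (p k).2) := by
    intro j
    obtain ⟨k, -, hk⟩ := hsur2' (j+1) j (Nat.lt_succ_self j)
    exact ⟨k, hk⟩
  -- assemble the bijection
  set e1 : ℕ ≃ ℕ := Equiv.ofBijective (fun k => (p k).1) ⟨hinj1, hsur1⟩ with he1
  set e2 : ℕ ≃ ℕ := Equiv.ofBijective (fun k => (p k).2) ⟨hinj2, hsur2⟩ with he2
  refine ⟨e1.symm.trans e2, ?_⟩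
  have hσ : ∀ n, dist (a n) (b ((e1.symm.trans e2) n)) < 1/((n:ℝ)+1) ∨
      dist (a n) (b ((e1.symm.trans e2) n)) < 1/((((e1.symm.trans e2) n):ℝ)+1) := by
    intro n
    set k := e1.symm n with hk
    have hk1 : (p k).1 = n := by
      show e1 k = n
      rw [hk, Equiv.apply_symm_apply]
    have hk2 : (e1.symm.trans e2) n = (p k).2 := by
      simp only [Equiv.trans_apply, ← hk]
      rfl
    rw [hk2, ← hk1]
    exact (hfresh k).2.2
  intro ε hε
  set σ := e1.symm.trans e2 with hσdef
  set S := {n | ¬ dist (a n) (b (σ n)) < ε} with hS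
  have hSsub : S ⊆ Set.Iio ⌈1/ε⌉₊ ∪ σ ⁻¹' (Set.Iio ⌈1/ε⌉₊) := by
    intro n hn
    rcases hσ n with h | h
    · left
      have h1 : ε < 1/((n:ℝ)+1) := lt_of_le_of_lt (not_lt.1 hn) h
      have h2 : (n:ℝ) < 1/ε := by
        rw [lt_div_iff₀ hε]
        rw [lt_div_iff₀ (by positivity : (0:ℝ) < (n:ℝ)+1)] at h1
        nlinarith
      exact Set.mem_Iio.2 (Nat.lt_ceil.2 h2)
    · right
      have h1 : ε < 1/(((σ n):ℝ)+1) := lt_of_le_of_lt (not_lt.1 hn) h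
      have h2 : ((σ n):ℝ) < 1/ε := by
        rw [lt_div_iff₀ hε]
        rw [lt_div_iff₀ (by positivity : (0:ℝ) < ((σ n):ℝ)+1)] at h1
        nlinarith
      exact Set.mem_Iio.2 (Nat.lt_ceil.2 h2)
  have hfin : S.Finite := Set.Finite.subset
    ((Set.finite_Iio _).union ((Set.finite_Iio _).preimage (σ.injective.injOn))) hSsub
  obtain ⟨N, hN⟩ := hfin.bddAbove
  refine ⟨N+1, fun n hn => ?_⟩
  by_contra h
  have := hN (Set.mem_setOf.2 h)
  omega

end BackForth

/-! ### The forward construction -/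

section Fwd

variable {Z Z' : Type*} [MetricSpace Z] [MetricSpace Z']

/-- the map `Itilde c → Itilde c'` induced by `f` on the base and `σ` on isolated points -/
def fwdFun (c : ℕ → Z) (c' : ℕ → Z') (f : Z → Z') (σ : ℕ → ℕ) (q : ↥(Itilde c)) :
    ↥(Itilde c') :=
  if h : (q : Z × ℝ).2 = 0 then ⟨(f (q : Z × ℝ).1, 0), base_mem c' _⟩
  else ⟨pt c' (σ (Classical.choose ((mem_Itilde.1 q.2).resolve_left h))), pt_mem c' _⟩

lemma fwdFun_base {c : ℕ → Z} {c' : ℕ → Z'} {f : Z → Z'} {σ : ℕ → ℕ} {q : ↥(Itilde c)}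
    (h : (q : Z × ℝ).2 = 0) :
    (fwdFun c c' f σ q : Z' × ℝ) = (f (q : Z × ℝ).1, 0) := by
  rw [fwdFun, dif_pos h]

lemma fwdFun_pt {c : ℕ → Z} {c' : ℕ → Z'} {f : Z → Z'} {σ : ℕ → ℕ} {q : ↥(Itilde c)}
    (h : ¬ (q : Z × ℝ).2 = 0) {n : ℕ} (hn : (q : Z × ℝ) = pt c n) :
    (fwdFun c c' f σ q : Z' × ℝ) = pt c' (σ n) := by
  rw [fwdFun, dif_neg h]
  have hsp := Classical.choose_spec ((mem_Itilde.1 q.2).resolve_left h)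
  have heq : pt c (Classical.choose ((mem_Itilde.1 q.2).resolve_left h)) = pt c n :=
    hsp.symm.trans hn
  exact congrArg (fun m => pt c' (σ m)) (pt_inj heq)

lemma fwdFun_leftInv {c : ℕ → Z} {c' : ℕ → Z'} {f : Z → Z'} {σ : ℕ → ℕ}
    {g : Z' → Z} {τ : ℕ → ℕ} (hgf : ∀ z, g (f z) = z) (hτσ : ∀ n, τ (σ n) = n) :
    ∀ q, fwdFun c' c g τ (fwdFun c c' f σ q) = q := by
  intro q
  by_cases h : (q : Z × ℝ).2 = 0
  · have h1 := fwdFun_base (c' := c') (f := f) (σ := σ) h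
    have h2 : (fwdFun c c' f σ q : Z' × ℝ).2 = 0 := by rw [h1]
    apply Subtype.ext
    rw [fwdFun_base h2, h1]
    exact Prod.ext (hgf _) h.symm
  · obtain ⟨n, hn⟩ := (mem_Itilde.1 q.2).resolve_left h
    have h1 := fwdFun_pt (c' := c') (f := f) (σ := σ) h hn
    have h2 : ¬ (fwdFun c c' f σ q : Z' × ℝ).2 = 0 := by
      rw [h1, pt_snd]
      exact (ht_pos _).ne'
    apply Subtype.ext
    rw [fwdFun_pt h2 h1, hτσ, hn]

lemma fwdFun_continuous {c : ℕ → Z} {c' : ℕ → Z'} {f : Z → Z'} {σ : ℕ → ℕ}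
    (hf : Continuous f)
    (hdist : ∀ ε > 0, ∃ N, ∀ n ≥ N, dist (f (c n)) (c' (σ n)) < ε)
    (htend : Filter.Tendsto σ atTop atTop) :
    Continuous (fwdFun c c' f σ) := by
  rw [continuous_iff_continuousAt]
  intro q
  by_cases hq : (q : Z × ℝ).2 = 0
  · rw [Metric.continuousAt_iff]
    intro ε hε
    have hfc : ContinuousAt f ((q : Z × ℝ).1) := hf.continuousAt
    obtain ⟨δ₁, hδ₁, hfd⟩ := Metric.continuousAt_iff.1 hfc (ε/2) (by linarith)
    obtain ⟨N₁, hN₁⟩ := hdist (ε/2) (by linarith)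
    obtain ⟨N₂, hN₂⟩ := Filter.eventually_atTop.1 (htend.eventually
      (Filter.eventually_ge_atTop (⌈1/ε⌉₊)))
    set N := max N₁ N₂ with hN
    refine ⟨min δ₁ (1/((N:ℝ)+1)), by positivity, ?_⟩
    intro r hr
    rw [Subtype.dist_eq, Prod.dist_eq] at hr
    have hr1 : dist (r : Z × ℝ).1 (q : Z × ℝ).1 < δ₁ :=
      lt_of_le_of_lt (le_max_left _ _) (hr.trans_le (min_le_left _ _))
    by_cases hr2 : (r : Z × ℝ).2 = 0
    · rw [Subtype.dist_eq, fwdFun_base hr2, fwdFun_base hq, Prod.dist_eq]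
      apply max_lt
      · exact lt_trans (hfd hr1) (by linarith)
      · simpa using hε
    · obtain ⟨n, hn⟩ := (mem_Itilde.1 r.2).resolve_left hr2
      have h2 : dist (r : Z × ℝ).2 (q : Z × ℝ).2 < 1/((N:ℝ)+1) :=
        lt_of_le_of_lt (le_max_right _ _) (hr.trans_le (min_le_right _ _))
      have hnN : N < n := by
        rw [hn, pt_snd, hq, Real.dist_eq, sub_zero, abs_of_nonneg (ht_pos n).le] at h2
        by_contra hcon
        push_neg at hcon
        have : 1/((N:ℝ)+1) ≤ 1/((n:ℝ)+1) := by
          apply one_div_le_one_div_of_le (by positivity)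
          exact_mod_cast Nat.add_le_add_right hcon 1
        linarith
      have hrn : (r : Z × ℝ).1 = c n := by rw [hn]; rfl
      rw [Subtype.dist_eq, fwdFun_pt hr2 hn, fwdFun_base hq, Prod.dist_eq]
      apply max_lt
      · show dist (c' (σ n)) (f (q : Z × ℝ).1) < ε
        calc dist (c' (σ n)) (f (q : Z × ℝ).1)
            ≤ dist (c' (σ n)) (f (c n)) + dist (f (c n)) (f (q : Z × ℝ).1) := dist_triangle _ _ _
          _ < ε/2 + ε/2 := by
              apply add_lt_add
              · rw [dist_comm]
                exact hN₁ n (le_trans (le_max_left _ _) (le_of_lt hnN))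
              · apply hfd
                rw [← hrn]
                exact hr1
          _ = ε := by ring
      · show dist ((1:ℝ)/((σ n : ℝ)+1)) 0 < ε
        rw [Real.dist_eq, sub_zero, abs_of_nonneg (ht_pos _).le]
        have hσn : ⌈1/ε⌉₊ ≤ σ n := hN₂ n (le_trans (le_max_right _ _) (le_of_lt hnN))
        have h3 : 1/ε ≤ ((σ n : ℝ)) := le_trans (Nat.le_ceil _) (by exact_mod_cast hσn)
        rw [div_lt_iff₀ (by positivity)]
        rw [div_le_iff₀ hε] at h3
        nlinarith
  · have hop := isOpen_singleton_pt c hq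
    apply ContinuousAt.congr continuousAt_const
    apply Filter.eventuallyEq_of_mem (hop.mem_nhds rfl)
    rintro r rfl
    rfl

/-- forward lemma: a homeomorphism of pairs induces a homeomorphism of the `Itilde`s -/
lemma main_forward [CompactSpace Z] {W : Set Z} {W' : Set Z'} {c : ℕ → Z} {c' : ℕ → Z'}
    (hc : Admissible W c) (hc' : Admissible W' c') (f : Z ≃ₜ Z') (hfW : f '' W = W') :
    ∃ F : ↥(Itilde c) ≃ₜ ↥(Itilde c'),
      (∀ q : ↥(Itilde c), (q : Z × ℝ).2 = 0 → (F q : Z' × ℝ) = (f (q : Z × ℝ).1, 0)) ∧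
      (∀ q : ↥(Itilde c), (q : Z × ℝ).2 ≠ 0 → (F q : Z' × ℝ).2 ≠ 0) := by
  obtain ⟨σ, hσ⟩ := exists_matching (fun n => f (c n)) c'
    (fun n => hc'.2.1 (hfW ▸ Set.mem_image_of_mem f (hc.1 n)))
    (fun m => by
      have h1 : c' m ∈ W' := hc'.1 m
      rw [← hfW] at h1
      have h2 : f '' W ⊆ f '' closure (Set.range c) := Set.image_mono hc.2.1
      have h3 : f '' closure (Set.range c) ⊆ closure (f '' Set.range c) :=
        image_closure_subset_closure_image f.continuous
      have h4 : f '' Set.range c = Set.range (fun n => f (c n)) := by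
        rw [← Set.range_comp]; rfl
      rw [← h4]
      exact h3 (h2 h1))
    (fun n => (hc.2.2 n).mono (fun k hk => by
      simp only [Set.mem_setOf_eq] at hk ⊢
      rw [hk]))
    hc'.2.2
  have htend : Filter.Tendsto σ atTop atTop := by
    have := σ.injective.tendsto_cofinite
    rwa [Nat.cofinite_eq_atTop] at this
  set E : ↥(Itilde c) ≃ ↥(Itilde c') :=
    ⟨fwdFun c c' f σ, fwdFun c' c f.symm σ.symm,
      fwdFun_leftInv (fun z => f.symm_apply_apply z) (fun n => σ.symm_apply_apply n),
      fwdFun_leftInv (fun z => f.apply_symm_apply z) (fun n => σ.apply_symm_apply n)⟩ with hE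
  have hcont : Continuous (E : ↥(Itilde c) → ↥(Itilde c')) :=
    fwdFun_continuous f.continuous hσ htend
  refine ⟨hcont.homeoOfEquivCompactToT2, ?_, ?_⟩
  · intro q hq
    exact fwdFun_base hq
  · intro q hq
    obtain ⟨n, hn⟩ := (mem_Itilde.1 q.2).resolve_left hq
    have := fwdFun_pt (c' := c') (f := f) (σ := σ) hq hn
    show (fwdFun c c' f σ q : Z' × ℝ).2 ≠ 0
    rw [this, pt_snd]
    exact (ht_pos _).ne'

end Fwd

/-! ### The backward (recovery) construction -/

section Bwd

variable {Z Z' : Type*} [MetricSpace Z] [MetricSpace Z']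

/-- the base copy of `Z` inside `Itilde c` -/
def baseSet (c : ℕ → Z) : Set ↥(Itilde c) := {q | (q : Z × ℝ).2 = 0}

/-- `Z` is homeomorphic to the base of `Itilde c` -/
def baseH (c : ℕ → Z) : Z ≃ₜ ↥(baseSet c) where
  toEquiv := ⟨fun z => ⟨⟨(z, 0), base_mem c z⟩, rfl⟩,
    fun q => ((q : ↥(Itilde c)) : Z × ℝ).1,
    fun z => rfl,
    fun q => by
      apply Subtype.ext; apply Subtype.ext
      exact Prod.ext rfl q.2.symm⟩
  continuous_toFun := by
    apply Continuous.subtype_mk; apply Continuous.subtype_mk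
    exact continuous_id.prodMk continuous_const
  continuous_invFun := continuous_fst.comp (continuous_subtype_val.comp continuous_subtype_val)

lemma baseSet_eq_nonisolated (c : ℕ → Z)
    (hisoW : ∀ z : Z, IsOpen ({z} : Set Z) → z ∈ closure (Set.range c))
    (hinf : ∀ n, {m | c m = c n}.Infinite) :
    baseSet c = {q : ↥(Itilde c) | ¬ IsOpen ({q} : Set ↥(Itilde c))} := by
  ext q
  constructor
  · exact fun h => not_isOpen_singleton_base c hisoW hinf h
  · intro h
    by_contra h2
    exact h (isOpen_singleton_pt c h2)

lemma image_nonisolated {P Q : Type*} [TopologicalSpace P] [TopologicalSpace Q] (G : P ≃ₜ Q) :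
    G '' {p | ¬ IsOpen ({p} : Set P)} = {q | ¬ IsOpen ({q} : Set Q)} := by
  ext q
  constructor
  · rintro ⟨p, hp, rfl⟩ hop
    exact hp (G.isOpen_image.1 (by rwa [Set.image_singleton]))
  · intro hq
    refine ⟨G.symm q, ?_, G.apply_symm_apply q⟩
    intro hop
    apply hq
    have := G.isOpen_image.2 hop
    rwa [Set.image_singleton, G.apply_symm_apply] at this

lemma mem_closure_iso_iff (c : ℕ → Z) {W : Set Z} (hc : Admissible W c) (hW : IsClosed W)
    {q : ↥(Itilde c)} (hq : (q : Z × ℝ).2 = 0) :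
    q ∈ closure {r : ↥(Itilde c) | (r : Z × ℝ).2 ≠ 0} ↔ (q : Z × ℝ).1 ∈ W := by
  have himg : (Subtype.val '' {r : ↥(Itilde c) | (r : Z × ℝ).2 ≠ 0}) = Set.range (pt c) := by
    ext p
    constructor
    · rintro ⟨r, hr, rfl⟩
      obtain ⟨n, hn⟩ := (mem_Itilde.1 r.2).resolve_left hr
      exact ⟨n, hn.symm⟩
    · rintro ⟨n, rfl⟩
      exact ⟨⟨pt c n, pt_mem c n⟩, (ht_pos n).ne', rfl⟩
  have hWc : closure (Set.range c) = W := by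
    apply Set.Subset.antisymm
    · apply closure_minimal _ hW
      rintro x ⟨n, rfl⟩
      exact hc.1 n
    · exact hc.2.1
  rw [closure_subtype, himg, closure_isoPts c hc.2.2]
  constructor
  · rintro (⟨n, hn⟩ | ⟨h1, h2⟩)
    · exfalso
      have h5 : (1:ℝ)/((n:ℝ)+1) = 0 := by rw [← pt_snd c n, hn]; exact hq
      exact (ht_pos n).ne' h5
    · rwa [hWc] at h1
  · intro h
    right
    exact ⟨by rwa [hWc], hq⟩

variable {W : Set Z} {W' : Set Z'} {c : ℕ → Z} {c' : ℕ → Z'}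

/-- a homeomorphism between `Itilde`s preserves the base -/
lemma base_iff_base
    (hc : Admissible W c) (hc' : Admissible W' c')
    (hisoW : ∀ z : Z, IsOpen ({z} : Set Z) → z ∈ W)
    (hisoW' : ∀ z : Z', IsOpen ({z} : Set Z') → z ∈ W')
    (G : ↥(Itilde c) ≃ₜ ↥(Itilde c')) (q : ↥(Itilde c)) :
    (q : Z × ℝ).2 = 0 ↔ ((G q : ↥(Itilde c')) : Z' × ℝ).2 = 0 := by
  have h1 := baseSet_eq_nonisolated c (fun z hz => hc.2.1 (hisoW z hz)) hc.2.2
  have h2 := baseSet_eq_nonisolated c' (fun z hz => hc'.2.1 (hisoW' z hz)) hc'.2.2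
  have h3 := image_nonisolated G
  constructor
  · intro hq
    have hh : q ∈ baseSet c := hq
    rw [h1] at hh
    have : G q ∈ {q' : ↥(Itilde c') | ¬ IsOpen ({q'} : Set ↥(Itilde c'))} := by
      rw [← h3]
      exact Set.mem_image_of_mem G hh
    rw [← h2] at this
    exact this
  · intro hq
    by_contra h
    have hop := isOpen_singleton_pt c h
    have hh : G q ∈ baseSet c' := hq
    rw [h2] at hh
    apply hh
    have := G.isOpen_image.2 hop
    rwa [Set.image_singleton] at this

/-- backward lemma: a homeomorphism of `Itilde`s induces a homeomorphism of pairs -/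
lemma main_backward
    (hc : Admissible W c) (hc' : Admissible W' c') (hW : IsClosed W) (hW' : IsClosed W')
    (hisoW : ∀ z : Z, IsOpen ({z} : Set Z) → z ∈ W)
    (hisoW' : ∀ z : Z', IsOpen ({z} : Set Z') → z ∈ W')
    (G : ↥(Itilde c) ≃ₜ ↥(Itilde c')) :
    ∃ g : Z ≃ₜ Z', g '' W = W' ∧
      ∀ z : Z, g z = ((G ⟨(z, 0), base_mem c z⟩ : ↥(Itilde c')) : Z' × ℝ).1 := by
  have hbase := base_iff_base hc hc' hisoW hisoW' G
  -- the closures of the isolated points correspond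
  have himg : G '' closure {r : ↥(Itilde c) | (r : Z × ℝ).2 ≠ 0} =
      closure {r : ↥(Itilde c') | (r : Z' × ℝ).2 ≠ 0} := by
    have hset : G '' {r : ↥(Itilde c) | (r : Z × ℝ).2 ≠ 0} =
        {r : ↥(Itilde c') | (r : Z' × ℝ).2 ≠ 0} := by
      ext r'
      constructor
      · rintro ⟨r, hr, rfl⟩
        exact fun h0 => hr ((hbase r).2 h0)
      · intro hr'
        refine ⟨G.symm r', ?_, G.apply_symm_apply r'⟩
        intro h0
        apply hr'
        have := (hbase (G.symm r')).1 h0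
        rwa [G.apply_symm_apply] at this
    rw [G.image_closure, hset]
  -- the bases correspond
  have hGS : G '' baseSet c = baseSet c' := by
    ext r'
    constructor
    · rintro ⟨r, hr, rfl⟩
      exact (hbase r).1 hr
    · intro hr'
      refine ⟨G.symm r', ?_, G.apply_symm_apply r'⟩
      have hr2 : ((G (G.symm r') : ↥(Itilde c')) : Z' × ℝ).2 = 0 := by
        rw [G.apply_symm_apply]
        exact hr'
      exact (hbase (G.symm r')).2 hr2
  set g1 : ↥(baseSet c) ≃ₜ ↥(baseSet c') :=
    (G.image (baseSet c)).trans (Homeomorph.setCongr hGS) with hg1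
  set g : Z ≃ₜ Z' := (baseH c).trans (g1.trans (baseH c').symm) with hg
  have hgval : ∀ z : Z, g z = ((G ⟨(z, 0), base_mem c z⟩ : ↥(Itilde c')) : Z' × ℝ).1 :=
    fun z => rfl
  refine ⟨g, ?_, hgval⟩
  apply Set.Subset.antisymm
  · rintro _ ⟨z, hz, rfl⟩
    set q : ↥(Itilde c) := ⟨(z, 0), base_mem c z⟩ with hqdef
    have hq0 : (q : Z × ℝ).2 = 0 := rfl
    have hqT : q ∈ closure {r : ↥(Itilde c) | (r : Z × ℝ).2 ≠ 0} :=
      (mem_closure_iso_iff c hc hW hq0).2 hz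
    have hGqT : G q ∈ closure {r : ↥(Itilde c') | (r : Z' × ℝ).2 ≠ 0} := by
      rw [← himg]
      exact Set.mem_image_of_mem G hqT
    have hGq0 : ((G q : ↥(Itilde c')) : Z' × ℝ).2 = 0 := (hbase q).1 hq0
    have := (mem_closure_iso_iff c' hc' hW' hGq0).1 hGqT
    rw [hgval z]
    exact this
  · intro z' hz'
    set q' : ↥(Itilde c') := ⟨(z', 0), base_mem c' z'⟩ with hq'def
    have hq'T : q' ∈ closure {r : ↥(Itilde c') | (r : Z' × ℝ).2 ≠ 0} :=
      (mem_closure_iso_iff c' hc' hW' rfl).2 hz'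
    set q : ↥(Itilde c) := G.symm q' with hqdef
    have hGq : G q = q' := G.apply_symm_apply q'
    have hq0 : (q : Z × ℝ).2 = 0 := by
      apply (hbase q).2
      rw [hGq]
    have hqT : q ∈ closure {r : ↥(Itilde c) | (r : Z × ℝ).2 ≠ 0} := by
      have hT : G.symm '' closure {r : ↥(Itilde c') | (r : Z' × ℝ).2 ≠ 0} =
          closure {r : ↥(Itilde c) | (r : Z × ℝ).2 ≠ 0} := by
        rw [← himg]
        ext x
        constructor
        · rintro ⟨y, ⟨w, hw, rfl⟩, rfl⟩
          rwa [G.symm_apply_apply]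
        · intro hx
          exact ⟨G x, ⟨x, hx, rfl⟩, G.symm_apply_apply x⟩
      rw [← hT]
      exact Set.mem_image_of_mem _ hq'T
    have hzW : (q : Z × ℝ).1 ∈ W := (mem_closure_iso_iff c hc hW hq0).1 hqT
    refine ⟨(q : Z × ℝ).1, hzW, ?_⟩
    rw [hgval]
    have hqeq : (⟨((q : Z × ℝ).1, 0), base_mem c _⟩ : ↥(Itilde c)) = q :=
      Subtype.ext (Prod.ext rfl hq0.symm)
    rw [hqeq, hGq]

end Bwd

/-! ### `liftSet` lemmas and final assembly -/

section Lift

variable {Z Z' : Type*} [MetricSpace Z] [MetricSpace Z']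

lemma homeo_symm_image {P Q : Type*} [TopologicalSpace P] [TopologicalSpace Q]
    (G : P ≃ₜ Q) {S : Set P} {T : Set Q} (h : G '' S = T) : G.symm '' T = S := by
  rw [← h]
  ext x
  constructor
  · rintro ⟨y, ⟨w, hw, rfl⟩, rfl⟩
    rwa [G.symm_apply_apply]
  · intro hx
    exact ⟨G x, ⟨x, hx, rfl⟩, G.symm_apply_apply x⟩

lemma mem_liftSet {c : ℕ → Z} {B : Set Z} {q : ↥(Itilde c)} :
    q ∈ liftSet c B ↔ (((q : Z × ℝ).1 ∈ B ∧ (q : Z × ℝ).2 = 0) ∨ ∃ n, (q : Z × ℝ) = pt c n) :=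
  Iff.rfl

lemma closure_range_eq {W : Set Z} {c : ℕ → Z} (hc : Admissible W c) (hW : IsClosed W) :
    closure (Set.range c) = W := by
  apply Set.Subset.antisymm
  · apply closure_minimal _ hW
    rintro x ⟨n, rfl⟩
    exact hc.1 n
  · exact hc.2.1

lemma isClosed_liftSet {W B : Set Z} {c : ℕ → Z} (hc : Admissible W c) (hW : IsClosed W)
    (hWB : W ⊆ B) (hB : IsClosed B) : IsClosed (liftSet c B) := by
  have hkey : liftSet c B = Subtype.val ⁻¹' ((B ×ˢ {(0:ℝ)}) ∪ Set.range (pt c)) := by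
    ext q
    constructor
    · rintro (⟨h1, h2⟩ | ⟨n, hn⟩)
      · exact Or.inl ⟨h1, h2⟩
      · exact Or.inr ⟨n, hn.symm⟩
    · rintro (⟨h1, h2⟩ | ⟨n, hn⟩)
      · exact Or.inl ⟨h1, h2⟩
      · exact Or.inr ⟨n, hn.symm⟩
  rw [hkey]
  apply IsClosed.preimage continuous_subtype_val
  apply isClosed_of_closure_subset
  rw [closure_union, (hB.prod isClosed_singleton).closure_eq, closure_isoPts c hc.2.2,
    closure_range_eq hc hW]
  rintro p (h | (h | ⟨h1, h2⟩))
  · exact Or.inl h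
  · exact Or.inr h
  · exact Or.inl ⟨hWB h1, h2⟩

lemma isolated_mem_liftSet {c : ℕ → Z} {B : Set Z}
    (hperf : ∀ z : Z, ¬ IsOpen ({z} : Set Z)) (hinf : ∀ n, {m | c m = c n}.Infinite)
    {q : ↥(Itilde c)} (hq : IsOpen ({q} : Set ↥(Itilde c))) : q ∈ liftSet c B := by
  have h2 : (q : Z × ℝ).2 ≠ 0 := by
    intro h0
    exact not_isOpen_singleton_base c (fun z hz => absurd hz (hperf z)) hinf h0 hq
  obtain ⟨n, hn⟩ := (mem_Itilde.1 q.2).resolve_left h2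
  exact Or.inr ⟨n, hn⟩

lemma image_liftSet (f : Z ≃ₜ Z') {c : ℕ → Z} {c' : ℕ → Z'}
    (F : ↥(Itilde c) ≃ₜ ↥(Itilde c'))
    (hFb : ∀ q : ↥(Itilde c), (q : Z × ℝ).2 = 0 → (F q : Z' × ℝ) = (f (q : Z × ℝ).1, 0))
    (hFi : ∀ q : ↥(Itilde c), (q : Z × ℝ).2 ≠ 0 → (F q : Z' × ℝ).2 ≠ 0)
    (B : Set Z) : F '' liftSet c B = liftSet c' (f '' B) := by
  ext r
  constructor
  · rintro ⟨q, hq, rfl⟩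
    rcases hq with ⟨hqB, hq0⟩ | ⟨n, hn⟩
    · left
      rw [hFb q hq0]
      exact ⟨Set.mem_image_of_mem f hqB, rfl⟩
    · have hq0 : (q : Z × ℝ).2 ≠ 0 := by
        rw [hn]
        exact (ht_pos n).ne'
      obtain ⟨m, hm⟩ := (mem_Itilde.1 (F q).2).resolve_left (hFi q hq0)
      exact Or.inr ⟨m, hm⟩
  · intro hr
    refine ⟨F.symm r, ?_, F.apply_symm_apply r⟩
    rcases hr with ⟨hrB, hr0⟩ | ⟨m, hm⟩
    · have h0 : (F.symm r : Z × ℝ).2 = 0 := by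
        by_contra h
        have := hFi (F.symm r) h
        rw [F.apply_symm_apply] at this
        exact this hr0
      left
      refine ⟨?_, h0⟩
      have hval := hFb (F.symm r) h0
      rw [F.apply_symm_apply] at hval
      have h1 : (r : Z' × ℝ).1 = f ((F.symm r : Z × ℝ).1) := by rw [hval]
      rw [h1] at hrB
      exact (f.injective.mem_set_image).1 hrB
    · have h0 : (F.symm r : Z × ℝ).2 ≠ 0 := by
        intro h
        have hval := hFb (F.symm r) h
        rw [F.apply_symm_apply] at hval
        have : (r : Z' × ℝ).2 = 0 := by rw [hval]
        rw [hm] at this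
        exact (ht_pos m).ne' this
      obtain ⟨n, hn⟩ := (mem_Itilde.1 (F.symm r).2).resolve_left h0
      exact Or.inr ⟨n, hn⟩

end Lift

end

end I2p

/-- for perfect compact metric spaces `X, Y` and closed subsets
`A ⊆ B ⊆ X`, `C ⊆ D ⊆ Y` with `A, C` nonempty, there is a homeomorphism `f : X → Y` with
`f(A) = C` and `f(B) = D` iff the twice-iterated spaces `I₂(X,B,A) = I_{d'}(I_d(X,A), B')`
and `I₂(Y,D,C) = I_{e'}(I_e(Y,C), D')` are homeomorphic. -/
theorem homeomorph_pair_iff_I2_homeomorph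
    {X Y : Type*} [MetricSpace X] [CompactSpace X] [MetricSpace Y] [CompactSpace Y]
    (hXperf : ∀ x : X, ¬ IsOpen ({x} : Set X))
    (hYperf : ∀ y : Y, ¬ IsOpen ({y} : Set Y))
    {A B : Set X} {C D : Set Y}
    (hA : IsClosed A) (hB : IsClosed B) (hAB : A ⊆ B) (hAne : A.Nonempty)
    (hC : IsClosed C) (hD : IsClosed D) (hCD : C ⊆ D) (hCne : C.Nonempty)
    {d : ℕ → X} {e : ℕ → Y} (hd : Admissible A d) (he : Admissible C e)
    {d' : ℕ → ↥(Itilde d)} {e' : ℕ → ↥(Itilde e)}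
    (hd' : Admissible (liftSet d B) d') (he' : Admissible (liftSet e D) e') :
    (∃ f : X ≃ₜ Y, f '' A = C ∧ f '' B = D) ↔
      Nonempty (↥(Itilde d') ≃ₜ ↥(Itilde e')) := by
  constructor
  · rintro ⟨f, hfA, hfB⟩
    obtain ⟨F₁, hF₁b, hF₁i⟩ := I2p.main_forward hd he f hfA
    have hlift : F₁ '' liftSet d B = liftSet e D := by
      rw [← hfB]
      exact I2p.image_liftSet f F₁ hF₁b hF₁i B
    obtain ⟨F₂, -, -⟩ := I2p.main_forward hd' he' F₁ hlift
    exact ⟨F₂⟩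
  · rintro ⟨G⟩
    have hisoX : ∀ z : X, IsOpen ({z} : Set X) → z ∈ A := fun z hz => absurd hz (hXperf z)
    have hisoY : ∀ z : Y, IsOpen ({z} : Set Y) → z ∈ C := fun z hz => absurd hz (hYperf z)
    have hisoXd : ∀ q : ↥(Itilde d), IsOpen ({q} : Set ↥(Itilde d)) → q ∈ liftSet d B :=
      fun q hq => I2p.isolated_mem_liftSet hXperf hd.2.2 hq
    have hisoYe : ∀ q : ↥(Itilde e), IsOpen ({q} : Set ↥(Itilde e)) → q ∈ liftSet e D :=
      fun q hq => I2p.isolated_mem_liftSet hYperf he.2.2 hq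
    have hclB : IsClosed (liftSet d B) := I2p.isClosed_liftSet hd hA hAB hB
    have hclD : IsClosed (liftSet e D) := I2p.isClosed_liftSet he hC hCD hD
    obtain ⟨g₁, hg₁lift, hg₁val⟩ := I2p.main_backward hd' he' hclB hclD hisoXd hisoYe G
    obtain ⟨g, hgA, hgval⟩ := I2p.main_backward hd he hA hC hisoX hisoY g₁
    refine ⟨g, hgA, ?_⟩
    have hbase1 := I2p.base_iff_base hd he hisoX hisoY g₁
    apply Set.Subset.antisymm
    · rintro _ ⟨z, hz, rfl⟩
      set q : ↥(Itilde d) := ⟨(z, 0), I2p.base_mem d z⟩ with hq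
      have hqB : q ∈ liftSet d B := Or.inl ⟨hz, rfl⟩
      have hmem : g₁ q ∈ liftSet e D := by
        rw [← hg₁lift]
        exact Set.mem_image_of_mem g₁ hqB
      have h0 : ((g₁ q : ↥(Itilde e)) : Y × ℝ).2 = 0 := (hbase1 q).1 rfl
      rcases hmem with ⟨h1, h2⟩ | ⟨n, hn⟩
      · rw [hgval z]
        exact h1
      · exfalso
        have h3 : ((g₁ q : ↥(Itilde e)) : Y × ℝ).2 = 1/((n:ℝ)+1) := by rw [hn]
        rw [h0] at h3
        exact (I2p.ht_pos n).ne' h3.symm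
    · intro z' hz'
      set q' : ↥(Itilde e) := ⟨(z', 0), I2p.base_mem e z'⟩ with hq'
      have hq'D : q' ∈ liftSet e D := Or.inl ⟨hz', rfl⟩
      set q : ↥(Itilde d) := g₁.symm q' with hqd
      have hGq : g₁ q = q' := g₁.apply_symm_apply q'
      have hq0 : (q : X × ℝ).2 = 0 := (hbase1 q).2 (by rw [hGq])
      have hqB : q ∈ liftSet d B := by
        rw [← I2p.homeo_symm_image g₁ hg₁lift]
        exact Set.mem_image_of_mem _ hq'D
      have hz1B : (q : X × ℝ).1 ∈ B := by
        rcases hqB with ⟨h1, h2⟩ | ⟨n, hn⟩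
        · exact h1
        · exfalso
          have h3 : (q : X × ℝ).2 = 1/((n:ℝ)+1) := by rw [hn]
          rw [hq0] at h3
          exact (I2p.ht_pos n).ne' h3.symm
      refine ⟨(q : X × ℝ).1, hz1B, ?_⟩
      rw [hgval]
      have hqeq : (⟨((q : X × ℝ).1, 0), I2p.base_mem d _⟩ : ↥(Itilde d)) = q :=
        Subtype.ext (Prod.ext rfl hq0.symm)
      rw [hqeq, hGq]
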